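/- Suppose Ψ = A ⊕ C is a Lie algebra isomorphism from N_{r,s}(U) to N_{r,s}(Ũ) with A : U → Ũ, C : ℝ^{r,s} → ℝ^{r,s} satisfying A^τ J̃_z A = J_{C^τ(z)} for all z and C C^τ = Id. Then the adjoint map Ψ^τ = A^τ ⊕ C^τ : N_{r,s}(Ũ) → N_{r,s}(U) is also a Lie algebra isomorphism, i.e. A J_{C^τ(z)} A^τ = J̃_z for all z. -/

import Mathlib

/-- If `Ψ = A ⊕ C : N_{r,s}(U) → N_{r,s}(W)` satisfies the isomorphism
relation `Aᵀ J̃_z A = J_{Cᵀ z}` with `C Cᵀ = Id`, then the adjoint `Ψᵀ = Aᵀ ⊕ Cᵀ` is also a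
Lie algebra isomorphism, i.e. `A J_{Cᵀ z} Aᵀ = J̃_z` for all `z`. -/
theorem adjoint_of_isomorphism_is_isomorphism
    {U W Z : Type*}
    [AddCommGroup U] [Module ℝ U] [FiniteDimensional ℝ U]
    [AddCommGroup W] [Module ℝ W] [FiniteDimensional ℝ W]
    [AddCommGroup Z] [Module ℝ Z] [FiniteDimensional ℝ Z]
    (BU : LinearMap.BilinForm ℝ U) (hBUnd : BU.Nondegenerate)
    (hBUsymm : ∀ x y : U, BU x y = BU y x)
    (BW : LinearMap.BilinForm ℝ W) (hBWnd : BW.Nondegenerate)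
    (hBWsymm : ∀ x y : W, BW x y = BW y x)
    (BZ : LinearMap.BilinForm ℝ Z) (hBZnd : BZ.Nondegenerate)
    (hBZsymm : ∀ a b : Z, BZ a b = BZ b a)
    (J : Z →ₗ[ℝ] Module.End ℝ U)
    (hJ : ∀ z, J z * J z = -(BZ z z) • (1 : Module.End ℝ U))
    (hJskew : ∀ (z : Z) (x y : U), BU (J z x) y + BU x (J z y) = 0)
    (J' : Z →ₗ[ℝ] Module.End ℝ W)
    (hJ' : ∀ z, J' z * J' z = -(BZ z z) • (1 : Module.End ℝ W))
    (hJ'skew : ∀ (z : Z) (x y : W), BW (J' z x) y + BW x (J' z y) = 0)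
    (A : U →ₗ[ℝ] W) (hA : Function.Bijective A)
    (C : Z →ₗ[ℝ] Z) (hC : Function.Bijective C)
    (Aτ : W →ₗ[ℝ] U) (hAτ : ∀ (x : U) (y : W), BW (A x) y = BU x (Aτ y))
    (Cτ : Z →ₗ[ℝ] Z) (hCτ : ∀ a b : Z, BZ (C a) b = BZ a (Cτ b))
    (hrel : ∀ z : Z, (Aτ ∘ₗ (J' z : W →ₗ[ℝ] W) ∘ₗ A : U →ₗ[ℝ] U) = J (Cτ z))
    (hCCτ : C ∘ₗ Cτ = LinearMap.id) :
    ∀ z : Z, (A ∘ₗ (J (Cτ z) : U →ₗ[ℝ] U) ∘ₗ Aτ : W →ₗ[ℝ] W) = J' z := by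
  -- Main case: `BZ z z ≠ 0`.
  have key : ∀ z : Z, BZ z z ≠ 0 →
      (A ∘ₗ (J (Cτ z) : U →ₗ[ℝ] U) ∘ₗ Aτ : W →ₗ[ℝ] W) = J' z := by
    intro z hz
    have hCz : C (Cτ z) = z := by
      have := LinearMap.congr_fun hCCτ z
      simpa using this
    have hcc : BZ (Cτ z) (Cτ z) = BZ z z := by
      rw [← hCτ, hCz]
    have hrelp : ∀ u : U, Aτ ((J' z) (A u)) = (J (Cτ z)) u := by
      intro u
      have := LinearMap.congr_fun (hrel z) u
      simpa using this
    have hK2p : ∀ u : U, (J (Cτ z)) ((J (Cτ z)) u) = -(BZ z z) • u := by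
      intro u
      have h := LinearMap.congr_fun (hJ (Cτ z)) u
      rw [hcc] at h
      simpa [Module.End.mul_apply] using h
    have hJ'2p : ∀ ww : W, (J' z) ((J' z) ww) = -(BZ z z) • ww := by
      intro ww
      have h := LinearMap.congr_fun (hJ' z) ww
      simpa [Module.End.mul_apply] using h
    have h3p : ∀ ww : W, A (Aτ ((J' z) (A (Aτ ((J' z) ww))))) = -(BZ z z) • ww := by
      intro ww
      obtain ⟨u, rfl⟩ := hA.2 ww
      rw [hrelp, hrelp, hK2p, map_smul]
    ext ww
    simp only [LinearMap.comp_apply]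
    have hv : (J' z) ((-(BZ z z))⁻¹ • (J' z) ww) = ww := by
      rw [map_smul, hJ'2p, smul_smul, inv_mul_cancel₀ (neg_ne_zero.mpr hz), one_smul]
    rw [← hrelp]
    rw [← hv, h3p, hJ'2p]
  intro z
  by_cases hz : BZ z z = 0
  · by_cases hz0 : z = 0
    · subst hz0
      ext ww
      simp
    · -- find w with BZ z w ≠ 0
      have hwex : ∃ w, BZ z w ≠ 0 := by
        by_contra h
        push_neg at h
        exact hz0 (hBZnd.1 z h)
      obtain ⟨w, hw⟩ := hwex
      set b := BZ z w with hb
      set d := BZ w w with hd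
      set t₀ : ℝ := -(2 * b) / d with ht₀
      set t₁ : ℝ := if t₀ = 1 then 2 else 1 with ht₁def
      set t₂ : ℝ := if t₀ = -1 then -2 else -1 with ht₂def
      have ht10 : t₁ ≠ 0 := by rw [ht₁def]; split_ifs <;> norm_num
      have ht20 : t₂ ≠ 0 := by rw [ht₂def]; split_ifs <;> norm_num
      have ht12 : t₁ ≠ t₂ := by rw [ht₁def, ht₂def]; split_ifs <;> norm_num
      have ht1t0 : t₁ ≠ t₀ := by
        rw [ht₁def]; split_ifs with h
        · rw [h]; norm_num
        · exact fun hc => h hc.symm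
      have ht2t0 : t₂ ≠ t₀ := by
        rw [ht₂def]; split_ifs with h
        · rw [h]; norm_num
        · exact fun hc => h hc.symm
      have nonnull : ∀ t : ℝ, t ≠ 0 → t ≠ t₀ → BZ (z + t • w) (z + t • w) ≠ 0 := by
        intro t ht htt
        have hexp : BZ (z + t • w) (z + t • w) = t * (2 * b + t * d) := by
          simp only [map_add, LinearMap.add_apply, map_smul, LinearMap.smul_apply,
            smul_eq_mul]
          rw [hz, hBZsymm w z, ← hb, ← hd]
          ring
        rw [hexp]
        refine mul_ne_zero ht ?_
        intro hsum
        by_cases hd0 : d = 0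
        · rw [hd0, mul_zero, add_zero] at hsum
          exact hw (by linarith)
        · apply htt
          rw [ht₀]
          field_simp
          linarith
      have hlin : ∀ t : ℝ,
          (A ∘ₗ (J (Cτ (z + t • w)) : U →ₗ[ℝ] U) ∘ₗ Aτ : W →ₗ[ℝ] W)
            = (A ∘ₗ (J (Cτ z) : U →ₗ[ℝ] U) ∘ₗ Aτ : W →ₗ[ℝ] W)
              + t • (A ∘ₗ (J (Cτ w) : U →ₗ[ℝ] U) ∘ₗ Aτ : W →ₗ[ℝ] W) := by
        intro t
        ext v
        simp [map_add, map_smul]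
      have h1 := key (z + t₁ • w) (nonnull t₁ ht10 ht1t0)
      have h2 := key (z + t₂ • w) (nonnull t₂ ht20 ht2t0)
      rw [hlin t₁, map_add, map_smul] at h1
      rw [hlin t₂, map_add, map_smul] at h2
      have hLw : (A ∘ₗ (J (Cτ w) : U →ₗ[ℝ] U) ∘ₗ Aτ : W →ₗ[ℝ] W) = J' w := by
        have e : t₁ • (A ∘ₗ (J (Cτ w) : U →ₗ[ℝ] U) ∘ₗ Aτ : W →ₗ[ℝ] W)
            - t₂ • (A ∘ₗ (J (Cτ w) : U →ₗ[ℝ] U) ∘ₗ Aτ : W →ₗ[ℝ] W)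
            = t₁ • (J' w : W →ₗ[ℝ] W) - t₂ • (J' w : W →ₗ[ℝ] W) := by
          have := congrArg₂ (fun a b : W →ₗ[ℝ] W => a - b) h1 h2
          simpa [add_sub_add_left_eq_sub] using this
        have e2 : (t₁ - t₂) • (A ∘ₗ (J (Cτ w) : U →ₗ[ℝ] U) ∘ₗ Aτ : W →ₗ[ℝ] W)
            = (t₁ - t₂) • (J' w : W →ₗ[ℝ] W) := by
          rw [sub_smul, sub_smul]; exact e
        exact smul_right_injective _ (sub_ne_zero.mpr ht12) e2
      rw [hLw] at h1
      exact add_right_cancel h1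
  · exact key z hz
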